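/- (One-step contraction of the BBK core map.) Assume γ ≥ √(12M) and 0 < h < 1/(4γ). Define Ψ : ℝⁿ × ℝⁿ → ℝⁿ × ℝⁿ by Ψ(x, v) = ( x + h v, ((1 − γh/2)/(1 + γh/2)) v − (h/(1 + γh/2)) ∇U(x + h v) ). Then with a = 1/M and b = (1 + γh/2)/γ, for all (x,v), (x̃,ṽ) ∈ ℝⁿ × ℝⁿ, ‖Ψ(x̃,ṽ) − Ψ(x,v)‖²_{a,b} ≤ (1 − mh/(4γ)) · ‖(x̃ − x, ṽ − v)‖²_{a,b}. -/

import Mathlib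

open scoped RealInnerProductSpace

/-- The squared modified Euclidean norm `‖(x,v)‖²_{a,b} = ‖x‖² + 2b⟨x,v⟩ + a‖v‖²`. -/
noncomputable def modNormSq {n : ℕ} (a b : ℝ)
    (z : EuclideanSpace ℝ (Fin n) × EuclideanSpace ℝ (Fin n)) : ℝ :=
  ‖z.1‖ ^ 2 + 2 * b * ⟪z.1, z.2⟫ + a * ‖z.2‖ ^ 2


variable {n : ℕ}

private lemma grad_differentiable {U : EuclideanSpace ℝ (Fin n) → ℝ} (hU : ContDiff ℝ 2 U) :
    Differentiable ℝ (gradient U) := by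
  have h1 : ContDiff ℝ 1 (fderiv ℝ U) := hU.fderiv_right (by norm_num)
  have h2 : Differentiable ℝ (fderiv ℝ U) := h1.differentiable one_ne_zero
  exact fun x => (((InnerProductSpace.toDual ℝ
    (EuclideanSpace ℝ (Fin n))).symm.toContinuousLinearEquiv.differentiable).comp h2) x

private lemma hasDerivAt_line_grad_inner {U : EuclideanSpace ℝ (Fin n) → ℝ}
    (hU : ContDiff ℝ 2 U) (y d w : EuclideanSpace ℝ (Fin n)) (t : ℝ) :
    HasDerivAt (fun τ : ℝ => ⟪gradient U (y + τ • d), w⟫)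
      ⟪fderiv ℝ (gradient U) (y + t • d) d, w⟫ t := by
  have hline : HasDerivAt (fun τ : ℝ => y + τ • d) d t := by
    simpa using ((hasDerivAt_id t).smul_const d).const_add y
  have hg : HasFDerivAt (gradient U) (fderiv ℝ (gradient U) (y + t • d)) (y + t • d) :=
    ((grad_differentiable hU) (y + t • d)).hasFDerivAt
  have h2 : HasDerivAt (fun τ : ℝ => gradient U (y + τ • d))
      (fderiv ℝ (gradient U) (y + t • d) d) t := by
    have := hg.comp_hasDerivAt t hline; exact this
  have h3 := ((innerSL ℝ w).hasFDerivAt.comp_hasDerivAt t h2)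
  simpa only [Function.comp_def, innerSL_apply_apply, real_inner_comm] using h3

private lemma hasDerivAt_line_U {U : EuclideanSpace ℝ (Fin n) → ℝ}
    (hU : ContDiff ℝ 2 U) (y d : EuclideanSpace ℝ (Fin n)) (t : ℝ) :
    HasDerivAt (fun τ : ℝ => U (y + τ • d)) ⟪gradient U (y + t • d), d⟫ t := by
  have hline : HasDerivAt (fun τ : ℝ => y + τ • d) d t := by
    simpa using ((hasDerivAt_id t).smul_const d).const_add y
  have hg : HasGradientAt U (gradient U (y + t • d)) (y + t • d) :=
    ((hU.differentiable (by norm_num)) (y + t • d)).hasGradientAt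
  have h2 := hg.hasFDerivAt.comp_hasDerivAt t hline
  simpa [InnerProductSpace.toDual_apply_apply, Function.comp_def] using h2

private lemma grad_mono {m M : ℝ} {U : EuclideanSpace ℝ (Fin n) → ℝ}
    (hU : ContDiff ℝ 2 U)
    (hHess : ∀ x d : EuclideanSpace ℝ (Fin n),
      m * ‖d‖ ^ 2 ≤ ⟪fderiv ℝ (gradient U) x d, d⟫ ∧
        ⟪fderiv ℝ (gradient U) x d, d⟫ ≤ M * ‖d‖ ^ 2)
    (p q : EuclideanSpace ℝ (Fin n)) :
    m * ‖q - p‖ ^ 2 ≤ ⟪gradient U q - gradient U p, q - p⟫ ∧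
      ⟪gradient U q - gradient U p, q - p⟫ ≤ M * ‖q - p‖ ^ 2 := by
  set d := q - p with hd
  have hpd : p + d = q := by rw [hd]; abel
  have h0 : (fun τ : ℝ => ⟪gradient U (p + τ • d), d⟫) 1
      - (fun τ : ℝ => ⟪gradient U (p + τ • d), d⟫) 0
      = ⟪gradient U q - gradient U p, q - p⟫ := by
    simp only [one_smul, zero_smul, add_zero, hpd]
    rw [← hd, ← inner_sub_left]
  constructor
  · have mono : Monotone (fun τ : ℝ => ⟪gradient U (p + τ • d), d⟫ - τ * (m * ‖d‖ ^ 2)) := by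
      apply monotone_of_deriv_nonneg
      · exact fun t => ((hasDerivAt_line_grad_inner hU p d d t).sub
          (hasDerivAt_mul_const _)).differentiableAt
      · intro t
        rw [HasDerivAt.deriv (f := fun τ : ℝ => ⟪gradient U (p + τ • d), d⟫ - τ * (m * ‖d‖ ^ 2))
          ((hasDerivAt_line_grad_inner hU p d d t).sub (hasDerivAt_mul_const _))]
        have := (hHess (p + t • d) d).1
        linarith
    have := mono (show (0:ℝ) ≤ 1 by norm_num)
    simp only at this
    nlinarith [h0]
  · have mono : Monotone (fun τ : ℝ => τ * (M * ‖d‖ ^ 2) - ⟪gradient U (p + τ • d), d⟫) := by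
      apply monotone_of_deriv_nonneg
      · exact fun t => ((hasDerivAt_mul_const _).sub
          (hasDerivAt_line_grad_inner hU p d d t)).differentiableAt
      · intro t
        rw [HasDerivAt.deriv (f := fun τ : ℝ => τ * (M * ‖d‖ ^ 2) - ⟪gradient U (p + τ • d), d⟫)
          ((hasDerivAt_mul_const _).sub (hasDerivAt_line_grad_inner hU p d d t))]
        have := (hHess (p + t • d) d).2
        linarith
    have := mono (show (0:ℝ) ≤ 1 by norm_num)
    simp only at this
    nlinarith [h0]

private lemma smul_norm_sq (t : ℝ) (d : EuclideanSpace ℝ (Fin n)) :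
    ‖t • d‖ ^ 2 = t ^ 2 * ‖d‖ ^ 2 := by
  rw [norm_smul, mul_pow, Real.norm_eq_abs, sq_abs]

private lemma descent_upper {m M : ℝ} {U : EuclideanSpace ℝ (Fin n) → ℝ}
    (hU : ContDiff ℝ 2 U)
    (hHess : ∀ x d : EuclideanSpace ℝ (Fin n),
      m * ‖d‖ ^ 2 ≤ ⟪fderiv ℝ (gradient U) x d, d⟫ ∧
        ⟪fderiv ℝ (gradient U) x d, d⟫ ≤ M * ‖d‖ ^ 2)
    (y d : EuclideanSpace ℝ (Fin n)) :
    U (y + d) ≤ U y + ⟪gradient U y, d⟫ + M / 2 * ‖d‖ ^ 2 := by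
  set χ : ℝ → ℝ := fun τ => U (y + τ • d) - τ * ⟪gradient U y, d⟫ - M / 2 * ‖d‖ ^ 2 * τ ^ 2
    with hχdef
  have hχ : ∀ t : ℝ, HasDerivAt χ
      (⟪gradient U (y + t • d), d⟫ - ⟪gradient U y, d⟫ - M / 2 * ‖d‖ ^ 2 * (2 * t ^ 1)) t :=
    fun t => ((hasDerivAt_line_U hU y d t).sub (hasDerivAt_mul_const _)).sub
      ((hasDerivAt_pow 2 t).const_mul (M / 2 * ‖d‖ ^ 2))
  have anti : AntitoneOn χ (Set.Icc 0 1) := by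
    apply antitoneOn_of_deriv_nonpos (convex_Icc 0 1)
    · exact fun t _ => ((hχ t).differentiableAt).continuousAt.continuousWithinAt
    · exact fun t _ => ((hχ t).differentiableAt).differentiableWithinAt
    · intro t ht
      rw [interior_Icc] at ht
      rw [(hχ t).deriv]
      have hb := (grad_mono hU hHess y (y + t • d)).2
      rw [add_sub_cancel_left, real_inner_smul_right, smul_norm_sq] at hb
      have hsub : ⟪gradient U (y + t • d) - gradient U y, d⟫
          = ⟪gradient U (y + t • d), d⟫ - ⟪gradient U y, d⟫ := inner_sub_left _ _ _
      nlinarith [ht.1, ht.2]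
  have h01 := anti (Set.mem_Icc.mpr (by norm_num)) (Set.mem_Icc.mpr (by norm_num))
    (zero_le_one)
  simp only [hχdef, one_smul, zero_smul, add_zero] at h01
  nlinarith [h01]

private lemma convex_lower {m M : ℝ} {U : EuclideanSpace ℝ (Fin n) → ℝ}
    (hU : ContDiff ℝ 2 U) (hm : 0 ≤ m)
    (hHess : ∀ x d : EuclideanSpace ℝ (Fin n),
      m * ‖d‖ ^ 2 ≤ ⟪fderiv ℝ (gradient U) x d, d⟫ ∧
        ⟪fderiv ℝ (gradient U) x d, d⟫ ≤ M * ‖d‖ ^ 2)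
    (y d : EuclideanSpace ℝ (Fin n)) :
    U y + ⟪gradient U y, d⟫ ≤ U (y + d) := by
  set χ : ℝ → ℝ := fun τ => U (y + τ • d) - τ * ⟪gradient U y, d⟫ with hχdef
  have hχ : ∀ t : ℝ, HasDerivAt χ
      (⟪gradient U (y + t • d), d⟫ - ⟪gradient U y, d⟫) t :=
    fun t => (hasDerivAt_line_U hU y d t).sub (hasDerivAt_mul_const _)
  have mono : MonotoneOn χ (Set.Icc 0 1) := by
    apply monotoneOn_of_deriv_nonneg (convex_Icc 0 1)
    · exact fun t _ => ((hχ t).differentiableAt).continuousAt.continuousWithinAt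
    · exact fun t _ => ((hχ t).differentiableAt).differentiableWithinAt
    · intro t ht
      rw [interior_Icc] at ht
      rw [(hχ t).deriv]
      have hb := (grad_mono hU hHess y (y + t • d)).1
      rw [add_sub_cancel_left, real_inner_smul_right, smul_norm_sq] at hb
      have hsub : ⟪gradient U (y + t • d) - gradient U y, d⟫
          = ⟪gradient U (y + t • d), d⟫ - ⟪gradient U y, d⟫ := inner_sub_left _ _ _
      nlinarith [ht.1, ht.2, mul_nonneg hm (sq_nonneg ‖d‖)]
  have h01 := mono (Set.mem_Icc.mpr (by norm_num)) (Set.mem_Icc.mpr (by norm_num))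
    (zero_le_one)
  simp only [hχdef, one_smul, zero_smul, add_zero] at h01
  nlinarith [h01]

private lemma breg {m M : ℝ} {U : EuclideanSpace ℝ (Fin n) → ℝ}
    (hU : ContDiff ℝ 2 U) (hm : 0 ≤ m) (hM : 0 < M)
    (hHess : ∀ x d : EuclideanSpace ℝ (Fin n),
      m * ‖d‖ ^ 2 ≤ ⟪fderiv ℝ (gradient U) x d, d⟫ ∧
        ⟪fderiv ℝ (gradient U) x d, d⟫ ≤ M * ‖d‖ ^ 2)
    (p q : EuclideanSpace ℝ (Fin n)) :
    ‖gradient U q - gradient U p‖ ^ 2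
      ≤ 2 * M * (U q - U p - ⟪gradient U p, q - p⟫) := by
  set g := gradient U q - gradient U p with hg
  have A := convex_lower hU hm hHess p ((q - p) - (1 / M) • g)
  have B := descent_upper hU hHess q ((-(1 / M)) • g)
  have heq : p + ((q - p) - (1 / M) • g) = q + (-(1 / M)) • g := by module
  rw [heq] at A
  have e1 : ⟪gradient U p, (q - p) - (1 / M) • g⟫
      = ⟪gradient U p, q - p⟫ - (1 / M) * ⟪gradient U p, g⟫ := by
    rw [inner_sub_right, real_inner_smul_right]
  have e2 : ⟪gradient U q, (-(1 / M)) • g⟫ = -(1 / M) * ⟪gradient U q, g⟫ :=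
    real_inner_smul_right _ _ _
  have e3 : ‖(-(1 / M)) • g‖ ^ 2 = (-(1 / M)) ^ 2 * ‖g‖ ^ 2 := smul_norm_sq _ _
  have e4 : ⟪gradient U q, g⟫ - ⟪gradient U p, g⟫ = ‖g‖ ^ 2 := by
    rw [← inner_sub_left, ← hg, real_inner_self_eq_norm_sq]
  rw [e1] at A
  rw [e2, e3] at B
  have hM' : M ≠ 0 := ne_of_gt hM
  have key : ∀ Up Uq Uz Ip Xp Xq G2 : ℝ,
      Up + (Ip - 1 / M * Xp) ≤ Uz →
      Uz ≤ Uq + -(1 / M) * Xq + M / 2 * ((-(1 / M)) ^ 2 * G2) →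
      Xq - Xp = G2 →
      G2 ≤ 2 * M * (Uq - Up - Ip) := by
    intro Up Uq Uz Ip Xp Xq G2 hA hB he
    have hAB := hA.trans hB
    have c1 : 1 / M * G2 - M / 2 * ((-(1 / M)) ^ 2 * G2) = G2 / (2 * M) := by
      field_simp
      ring
    have c2 : 1 / M * Xq - 1 / M * Xp = 1 / M * G2 := by rw [← mul_sub, he]
    have c3 : G2 / (2 * M) ≤ Uq - Up - Ip := by linarith
    rw [show 2 * M * (Uq - Up - Ip) = (Uq - Up - Ip) * (2 * M) by ring,
      ← div_le_iff₀ (by positivity : (0:ℝ) < 2 * M)]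
    exact c3
  exact key (U p) (U q) (U (q + (-(1 / M)) • g)) ⟪gradient U p, q - p⟫
    ⟪gradient U p, g⟫ ⟪gradient U q, g⟫ (‖g‖ ^ 2) A B e4

private lemma cocoercive {m M : ℝ} {U : EuclideanSpace ℝ (Fin n) → ℝ}
    (hU : ContDiff ℝ 2 U) (hm : 0 ≤ m) (hM : 0 < M)
    (hHess : ∀ x d : EuclideanSpace ℝ (Fin n),
      m * ‖d‖ ^ 2 ≤ ⟪fderiv ℝ (gradient U) x d, d⟫ ∧
        ⟪fderiv ℝ (gradient U) x d, d⟫ ≤ M * ‖d‖ ^ 2)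
    (p q : EuclideanSpace ℝ (Fin n)) :
    ‖gradient U q - gradient U p‖ ^ 2
      ≤ M * ⟪gradient U q - gradient U p, q - p⟫ := by
  have b1 := breg hU hm hM hHess p q
  have b2 := breg hU hm hM hHess q p
  have e1 : ‖gradient U p - gradient U q‖ = ‖gradient U q - gradient U p‖ :=
    norm_sub_rev _ _
  have e2 : ⟪gradient U q, p - q⟫ = -⟪gradient U q, q - p⟫ := by
    rw [show p - q = -(q - p) by abel, inner_neg_right]
  have e3 : ⟪gradient U q - gradient U p, q - p⟫
      = ⟪gradient U q, q - p⟫ - ⟪gradient U p, q - p⟫ := inner_sub_left _ _ _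
  rw [e1] at b2
  rw [e2] at b2
  nlinarith [b1, b2]


set_option maxHeartbeats 1000000 in
private lemma key1_aux (m M γ h : ℝ)
    (hm : 0 < m) (hmM : m < M) (hγpos : 0 < γ) (hγ2 : 12 * M ≤ γ ^ 2)
    (hh : 0 < h) (hs4 : γ * h < 1 / 4) :
    (1/M) * ((1 - γ*h/2)/(1 + γ*h/2))^2
      - (1 - m*h/(4*γ)) * (1/M + h^2 - 2*((1 + γ*h/2)/γ)*h) ≤ -(h*γ/M) := by
  have hM : 0 < M := hm.trans hmM
  have hu : (0:ℝ) < γ * h := mul_pos hγpos hh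
  have h1s : (0:ℝ) < 1 + γ*h/2 := by nlinarith
  have h1ms : (0:ℝ) < 1 - γ*h/2 := by nlinarith
  rw [← sub_nonpos]
  have hD : (0:ℝ) < M * γ * (1 + γ*h/2)^2 := by positivity
  have factored : (1/M) * ((1 - γ*h/2)/(1 + γ*h/2))^2
      - (1 - m*h/(4*γ)) * (1/M + h^2 - 2*((1 + γ*h/2)/γ)*h) - (-(h*γ/M))
      = ((γ*(1-γ*h/2)^2*4*γ - (4*γ - m*h)*(γ + M*γ*h^2 - 2*M*h*(1+γ*h/2))*(1+γ*h/2)^2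
          + 4*γ*h*γ^2*(1+γ*h/2)^2) ) / (4*γ^2*M*(1+γ*h/2)^2) := by
    field_simp
    ring
  rw [factored]
  apply div_nonpos_of_nonpos_of_nonneg _ (by positivity)
  have hγ3h : (0:ℝ) < γ^3*h := by positivity
  have hBRub : 4*h*γ^3 + 8*M*γ*h + m*γ*h - 2*m*M*h^2 ≤ (19/4)*(γ^3*h) := by
    nlinarith [mul_le_mul_of_nonneg_right hγ2 hu.le,
      mul_le_mul_of_nonneg_right hmM.le hu.le,
      mul_nonneg (mul_nonneg hm.le (hm.trans hmM).le) (sq_nonneg h), hu]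
  have h2Mh : 2*M*h ≤ γ := by
    nlinarith [mul_le_mul_of_nonneg_right hγ2 hh.le,
      mul_le_mul_of_nonneg_left hs4.le hγpos.le, hγpos, hh]
  have hBR0 : (0:ℝ) ≤ 4*h*γ^3 + 8*M*γ*h + m*γ*h - 2*m*M*h^2 := by
    nlinarith [mul_nonneg (mul_nonneg hm.le hh.le) (sub_nonneg.mpr h2Mh),
      mul_pos (mul_pos hM hγpos) hh, hγ3h]
  have h81 : (1 + γ*h/2)^2 ≤ 81/64 := by nlinarith [hu, hs4]
  have hprod : (1 + γ*h/2)^2 * (4*h*γ^3 + 8*M*γ*h + m*γ*h - 2*m*M*h^2)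
      ≤ (81/64) * ((19/4)*(γ^3*h)) :=
    mul_le_mul h81 hBRub hBR0 (by norm_num)
  nlinarith [hprod, hγ3h]

set_option maxHeartbeats 1000000 in
private lemma key2_aux (m M γ h r2 G e uq : ℝ)
    (hm : 0 < m) (hmM : m < M) (hγpos : 0 < γ) (hγ2 : 12 * M ≤ γ ^ 2)
    (hh : 0 < h) (hs4 : γ * h < 1 / 4)
    (hr2 : 0 ≤ r2) (he : 0 ≤ e)
    (hG1 : m * r2 ≤ G) (hco : e ≤ M * G)
    (huq : uq = (m*h/(4*γ))^2*((1+γ*h/2)/γ - h)^2*r2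
      - 2*((m*h/(4*γ))*((1+γ*h/2)/γ - h))*((1/M)*((1-γ*h/2)/(1+γ*h/2))*(h/(1+γ*h/2)))*G
      + ((1/M)*((1-γ*h/2)/(1+γ*h/2))*(h/(1+γ*h/2)))^2*e) :
    m*h/(4*γ)*r2 - 2*(h/γ)*G + (h/(1+γ*h/2))^2*(1/M)*e + uq*(M/(h*γ)) ≤ 0 := by
  have hM : 0 < M := hm.trans hmM
  have hu : (0:ℝ) < γ * h := mul_pos hγpos hh
  have h1s : (0:ℝ) < 1 + γ*h/2 := by nlinarith
  have h1ms : (0:ℝ) < 1 - γ*h/2 := by nlinarith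
  have hG0 : 0 ≤ G := le_trans (by positivity) hG1
  have expand : uq*(M/(h*γ)) = (M/(h*γ))*(m*h/(4*γ))^2*((1+γ*h/2)/γ - h)^2*r2
      - (M/(h*γ))*(2*((m*h/(4*γ))*((1+γ*h/2)/γ - h))*((1/M)*((1-γ*h/2)/(1+γ*h/2))*(h/(1+γ*h/2))))*G
      + (M/(h*γ))*((1/M)*((1-γ*h/2)/(1+γ*h/2))*(h/(1+γ*h/2)))^2*e := by
    rw [huq]; ring
  have hdropG : 0 ≤ (M/(h*γ))*(2*((m*h/(4*γ))*((1+γ*h/2)/γ - h))*((1/M)*((1-γ*h/2)/(1+γ*h/2))*(h/(1+γ*h/2))))*G := by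
    have hbh : (0:ℝ) ≤ (1+γ*h/2)/γ - h := by
      rw [sub_nonneg, ← sub_nonneg]
      have : (1+γ*h/2)/γ - h = (1-γ*h/2)/γ := by field_simp; ring
      rw [this]; positivity
    have h2 : (0:ℝ) ≤ (1/M)*((1-γ*h/2)/(1+γ*h/2))*(h/(1+γ*h/2)) := by positivity
    have h3 : (0:ℝ) ≤ m*h/(4*γ) := by positivity
    positivity
  have ce : (h/(1+γ*h/2))^2*(1/M) + (M/(h*γ))*((1/M)*((1-γ*h/2)/(1+γ*h/2))*(h/(1+γ*h/2)))^2
      ≤ (5/4)*(h/(γ*M)) := by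
    rw [← sub_nonpos]
    have factored : (h/(1+γ*h/2))^2*(1/M) + (M/(h*γ))*((1/M)*((1-γ*h/2)/(1+γ*h/2))*(h/(1+γ*h/2)))^2
        - (5/4)*(h/(γ*M))
        = (h*(4*(γ*h)*(1+γ*h/2)^2 + 4*(1-γ*h/2)^2 - 5*(1+γ*h/2)^4)) / (4*γ*M*(1+γ*h/2)^4) := by
      field_simp
    rw [factored]
    apply div_nonpos_of_nonpos_of_nonneg _ (by positivity)
    have hP : 4*(γ*h)*(1+γ*h/2)^2 + 4*(1-γ*h/2)^2 - 5*(1+γ*h/2)^4 ≤ 0 := by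
      nlinarith [hu, hs4, sq_nonneg (γ*h), sq_nonneg (1+γ*h/2), sq_nonneg (1-γ*h/2)]
    nlinarith [mul_nonpos_of_nonneg_of_nonpos hh.le hP]
  have cr : m*h/(4*γ) + (M/(h*γ))*(m*h/(4*γ))^2*((1+γ*h/2)/γ - h)^2
      ≤ (1/2)*(m*h/γ) := by
    rw [← sub_nonpos]
    have factored : m*h/(4*γ) + (M/(h*γ))*(m*h/(4*γ))^2*((1+γ*h/2)/γ - h)^2 - (1/2)*(m*h/γ)
        = (m*h*(M*m*(1-γ*h/2)^2 - 4*γ^4)) / (16*γ^5) := by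
      field_simp
      ring
    rw [factored]
    apply div_nonpos_of_nonpos_of_nonneg _ (by positivity)
    have hP : M*m*(1-γ*h/2)^2 - 4*γ^4 ≤ 0 := by
      have hss : (1-γ*h/2)^2 ≤ 1 := by nlinarith [hu, hs4]
      have h1 : M*m*(1-γ*h/2)^2 ≤ M*M*(1-γ*h/2)^2 :=
        mul_le_mul_of_nonneg_right (mul_le_mul_of_nonneg_left hmM.le hM.le) (sq_nonneg _)
      have h2 : M*M*(1-γ*h/2)^2 ≤ M*M*1 :=
        mul_le_mul_of_nonneg_left hss (mul_pos hM hM).le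
      nlinarith [mul_le_mul hγ2 hγ2 (by positivity : (0:ℝ) ≤ 12*M) (sq_nonneg γ),
        sq_nonneg (γ^2), h1, h2]
    nlinarith [mul_nonpos_of_nonneg_of_nonpos (mul_pos hm hh).le hP]
  have eStep : ((h/(1+γ*h/2))^2*(1/M) + (M/(h*γ))*((1/M)*((1-γ*h/2)/(1+γ*h/2))*(h/(1+γ*h/2)))^2)*e
      ≤ (5/4)*(h/γ)*G := by
    calc ((h/(1+γ*h/2))^2*(1/M) + (M/(h*γ))*((1/M)*((1-γ*h/2)/(1+γ*h/2))*(h/(1+γ*h/2)))^2)*e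
        ≤ ((5/4)*(h/(γ*M)))*e := mul_le_mul_of_nonneg_right ce he
      _ ≤ ((5/4)*(h/(γ*M)))*(M*G) := mul_le_mul_of_nonneg_left hco (by positivity)
      _ = (5/4)*(h/γ)*G := by field_simp
  have rStep : (m*h/(4*γ) + (M/(h*γ))*(m*h/(4*γ))^2*((1+γ*h/2)/γ - h)^2)*r2
      ≤ ((1/2)*(m*h/γ))*r2 := mul_le_mul_of_nonneg_right cr hr2
  have gStep : (3/4)*(h/γ)*(m*r2) ≤ (3/4)*(h/γ)*G :=
    mul_le_mul_of_nonneg_left hG1 (by positivity)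
  have hfin : 0 ≤ (m*h/γ)*r2 := by positivity
  ring_nf at eStep rStep gStep expand hdropG hfin ⊢
  linarith [eStep, rStep, gStep, expand, hdropG, hfin]

set_option maxHeartbeats 1000000 in
private lemma scalar_core (m M γ h r2 w2 pI tI G e uq : ℝ)
    (hm : 0 < m) (hmM : m < M) (hγpos : 0 < γ) (hγ2 : 12 * M ≤ γ ^ 2)
    (hh : 0 < h) (hs4 : γ * h < 1 / 4)
    (hr2 : 0 ≤ r2) (hw2 : 0 ≤ w2) (he : 0 ≤ e)
    (hG1 : m * r2 ≤ G) (hco : e ≤ M * G)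
    (huq : uq = (m*h/(4*γ))^2*((1+γ*h/2)/γ - h)^2*r2
      - 2*((m*h/(4*γ))*((1+γ*h/2)/γ - h))*((1/M)*((1-γ*h/2)/(1+γ*h/2))*(h/(1+γ*h/2)))*G
      + ((1/M)*((1-γ*h/2)/(1+γ*h/2))*(h/(1+γ*h/2)))^2*e)
    (hcross : 2*((m*h/(4*γ))*((1+γ*h/2)/γ - h)*pI
        - (1/M)*((1-γ*h/2)/(1+γ*h/2))*(h/(1+γ*h/2))*tI)
      ≤ (h*γ/M)*w2 + uq*(M/(h*γ))) :
    r2 + 2*((1+γ*h/2)/γ)*(((1-γ*h/2)/(1+γ*h/2))*pI - (h/(1+γ*h/2))*G)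
      + (1/M)*(((1-γ*h/2)/(1+γ*h/2))^2*w2
        - 2*(((1-γ*h/2)/(1+γ*h/2))*(h/(1+γ*h/2)))*tI + (h/(1+γ*h/2))^2*e)
    ≤ (1 - m*h/(4*γ)) * ((r2 - 2*h*pI + h^2*w2)
        + 2*((1+γ*h/2)/γ)*(pI - h*w2) + (1/M)*w2) := by
  have hM : 0 < M := hm.trans hmM
  have hu : (0:ℝ) < γ * h := mul_pos hγpos hh
  have h1s : (0:ℝ) < 1 + γ*h/2 := by nlinarith
  have h1ms : (0:ℝ) < 1 - γ*h/2 := by nlinarith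
  have hG0 : 0 ≤ G := le_trans (by positivity) hG1
  -- the exact decomposition identity
  have iden : (r2 + 2*((1+γ*h/2)/γ)*(((1-γ*h/2)/(1+γ*h/2))*pI - (h/(1+γ*h/2))*G)
      + (1/M)*(((1-γ*h/2)/(1+γ*h/2))^2*w2
        - 2*(((1-γ*h/2)/(1+γ*h/2))*(h/(1+γ*h/2)))*tI + (h/(1+γ*h/2))^2*e))
      - (1 - m*h/(4*γ)) * ((r2 - 2*h*pI + h^2*w2)
        + 2*((1+γ*h/2)/γ)*(pI - h*w2) + (1/M)*w2)
      = (m*h/(4*γ)*r2 - 2*(h/γ)*G + (h/(1+γ*h/2))^2*(1/M)*e)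
        + (2*((m*h/(4*γ))*((1+γ*h/2)/γ - h)*pI
            - (1/M)*((1-γ*h/2)/(1+γ*h/2))*(h/(1+γ*h/2))*tI))
        + ((1/M)*((1-γ*h/2)/(1+γ*h/2))^2
            - (1 - m*h/(4*γ))*(1/M + h^2 - 2*((1+γ*h/2)/γ)*h))*w2 := by
    field_simp
    ring
  -- key1 : Cyy ≤ -K
  have key1 := key1_aux m M γ h hm hmM hγpos hγ2 hh hs4
  -- key2 : E0 + uq*(M/(hγ)) ≤ 0
  have key2 := key2_aux m M γ h r2 G e uq hm hmM hγpos hγ2 hh hs4 hr2 he hG1 hco huq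
  have w2term : ((1/M)*((1-γ*h/2)/(1+γ*h/2))^2
      - (1 - m*h/(4*γ))*(1/M + h^2 - 2*((1+γ*h/2)/γ)*h))*w2 ≤ (-(h*γ/M))*w2 :=
    mul_le_mul_of_nonneg_right key1 hw2
  ring_nf at iden hcross w2term key2 ⊢
  linarith [iden, hcross, w2term, key2]


set_option maxHeartbeats 1000000 in
theorem bbk_core_one_step_contraction {n : ℕ} (m M γ h : ℝ)
    (U : EuclideanSpace ℝ (Fin n) → ℝ)
    (hm : 0 < m) (hmM : m < M) (hU : ContDiff ℝ 2 U)
    (hHess : ∀ x d : EuclideanSpace ℝ (Fin n),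
      m * ‖d‖ ^ 2 ≤ ⟪fderiv ℝ (gradient U) x d, d⟫ ∧
        ⟪fderiv ℝ (gradient U) x d, d⟫ ≤ M * ‖d‖ ^ 2)
    (hγ : γ ≥ Real.sqrt (12 * M)) (hh : 0 < h) (hh2 : h < 1 / (4 * γ)) :
    ∀ x v x' v' : EuclideanSpace ℝ (Fin n),
      modNormSq (1 / M) ((1 + γ * h / 2) / γ)
          ((x' + h • v',
              ((1 - γ * h / 2) / (1 + γ * h / 2)) • v'
                - (h / (1 + γ * h / 2)) • gradient U (x' + h • v')) -
            (x + h • v,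
              ((1 - γ * h / 2) / (1 + γ * h / 2)) • v
                - (h / (1 + γ * h / 2)) • gradient U (x + h • v))) ≤
        (1 - m * h / (4 * γ)) *
          modNormSq (1 / M) ((1 + γ * h / 2) / γ) (x' - x, v' - v) := by
  intro x v x' v'
  have hM : 0 < M := hm.trans hmM
  have hγpos : 0 < γ := lt_of_lt_of_le (Real.sqrt_pos.mpr (by positivity)) hγ
  have hγ2 : 12 * M ≤ γ ^ 2 := by
    have h1 : Real.sqrt (12 * M) ^ 2 ≤ γ ^ 2 :=
      pow_le_pow_left₀ (Real.sqrt_nonneg _) hγ 2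
    rwa [Real.sq_sqrt (by positivity)] at h1
  have hs4 : γ * h < 1 / 4 := by
    have h2 := mul_lt_mul_of_pos_left hh2 hγpos
    have h3 : γ * (1 / (4 * γ)) = 1 / 4 := by
      rw [mul_one_div, div_eq_div_iff (by positivity) (by norm_num)]
      ring
    rwa [h3] at h2
  set y := x + h • v with hy
  set y' := x' + h • v' with hy'
  set Z := y' - y with hZdef
  set W := v' - v with hWdef
  set gv := gradient U y' - gradient U y with hgvdef
  -- analytic inequalities
  have hmono := grad_mono hU hHess y y'
  have hG1 : m * ‖Z‖ ^ 2 ≤ ⟪gv, Z⟫ := hmono.1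
  have hco : ‖gv‖ ^ 2 ≤ M * ⟪gv, Z⟫ := cocoercive hU hm.le hM hHess y y'
  -- component reduction
  have hsnd : ((1 - γ * h / 2) / (1 + γ * h / 2)) • v'
        - (h / (1 + γ * h / 2)) • gradient U y'
        - (((1 - γ * h / 2) / (1 + γ * h / 2)) • v
            - (h / (1 + γ * h / 2)) • gradient U y)
      = ((1 - γ * h / 2) / (1 + γ * h / 2)) • W - (h / (1 + γ * h / 2)) • gv := by
    rw [hWdef, hgvdef]
    module
  have hx : x' - x = Z - h • W := by
    rw [hZdef, hWdef, hy, hy']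
    module
  rw [Prod.mk_sub_mk, hsnd, hx]
  simp only [modNormSq, ← hZdef]
  -- scalar expansions
  have eL1 : ⟪Z, ((1 - γ * h / 2) / (1 + γ * h / 2)) • W - (h / (1 + γ * h / 2)) • gv⟫
      = ((1 - γ * h / 2) / (1 + γ * h / 2)) * ⟪Z, W⟫ - (h / (1 + γ * h / 2)) * ⟪gv, Z⟫ := by
    rw [inner_sub_right, real_inner_smul_right, real_inner_smul_right, real_inner_comm Z gv]
  have eL2 : ‖((1 - γ * h / 2) / (1 + γ * h / 2)) • W - (h / (1 + γ * h / 2)) • gv‖ ^ 2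
      = ((1 - γ * h / 2) / (1 + γ * h / 2)) ^ 2 * ‖W‖ ^ 2
        - 2 * (((1 - γ * h / 2) / (1 + γ * h / 2)) * (h / (1 + γ * h / 2))) * ⟪gv, W⟫
        + (h / (1 + γ * h / 2)) ^ 2 * ‖gv‖ ^ 2 := by
    rw [norm_sub_sq_real, smul_norm_sq, smul_norm_sq, real_inner_smul_left,
      real_inner_smul_right, real_inner_comm W gv]
    ring
  have eR1 : ‖Z - h • W‖ ^ 2 = ‖Z‖ ^ 2 - 2 * h * ⟪Z, W⟫ + h ^ 2 * ‖W‖ ^ 2 := by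
    rw [norm_sub_sq_real, smul_norm_sq, real_inner_smul_right]
    ring
  have eR2 : ⟪Z - h • W, W⟫ = ⟪Z, W⟫ - h * ‖W‖ ^ 2 := by
    rw [inner_sub_left, real_inner_smul_left, real_inner_self_eq_norm_sq]
  rw [eL1, eL2, eR1, eR2]
  -- cross term via Cauchy-Schwarz and AM-GM
  set uvec := (m * h / (4 * γ) * ((1 + γ * h / 2) / γ - h)) • Z
      - ((1 / M) * ((1 - γ * h / 2) / (1 + γ * h / 2)) * (h / (1 + γ * h / 2))) • gv
    with huvec
  have huv : ‖uvec‖ ^ 2 = (m * h / (4 * γ)) ^ 2 * ((1 + γ * h / 2) / γ - h) ^ 2 * ‖Z‖ ^ 2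
      - 2 * ((m * h / (4 * γ)) * ((1 + γ * h / 2) / γ - h))
          * ((1 / M) * ((1 - γ * h / 2) / (1 + γ * h / 2)) * (h / (1 + γ * h / 2))) * ⟪gv, Z⟫
      + ((1 / M) * ((1 - γ * h / 2) / (1 + γ * h / 2)) * (h / (1 + γ * h / 2))) ^ 2
          * ‖gv‖ ^ 2 := by
    rw [huvec, norm_sub_sq_real, smul_norm_sq, smul_norm_sq, real_inner_smul_left,
      real_inner_smul_right, real_inner_comm Z gv]
    ring
  have hiw : ⟪uvec, W⟫ = (m * h / (4 * γ)) * ((1 + γ * h / 2) / γ - h) * ⟪Z, W⟫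
      - (1 / M) * ((1 - γ * h / 2) / (1 + γ * h / 2)) * (h / (1 + γ * h / 2)) * ⟪gv, W⟫ := by
    rw [huvec, inner_sub_left, real_inner_smul_left, real_inner_smul_left]
  have hamgm : 2 * (‖uvec‖ * ‖W‖) ≤ (h * γ / M) * ‖W‖ ^ 2 + ‖uvec‖ ^ 2 * (M / (h * γ)) := by
    rw [← sub_nonneg]
    have hid : (h * γ / M) * ‖W‖ ^ 2 + ‖uvec‖ ^ 2 * (M / (h * γ)) - 2 * (‖uvec‖ * ‖W‖)
        = (M / (h * γ)) * (‖uvec‖ - (h * γ / M) * ‖W‖) ^ 2 := by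
      field_simp
      ring
    rw [hid]
    positivity
  have hcross : 2 * ((m * h / (4 * γ)) * ((1 + γ * h / 2) / γ - h) * ⟪Z, W⟫
        - (1 / M) * ((1 - γ * h / 2) / (1 + γ * h / 2)) * (h / (1 + γ * h / 2)) * ⟪gv, W⟫)
      ≤ (h * γ / M) * ‖W‖ ^ 2 + ‖uvec‖ ^ 2 * (M / (h * γ)) := by
    have hcs := real_inner_le_norm uvec W
    rw [hiw] at hcs
    linarith [hamgm, hcs]
  exact scalar_core m M γ h (‖Z‖ ^ 2) (‖W‖ ^ 2) ⟪Z, W⟫ ⟪gv, W⟫ ⟪gv, Z⟫ (‖gv‖ ^ 2)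
    (‖uvec‖ ^ 2) hm hmM hγpos hγ2 hh hs4 (sq_nonneg _) (sq_nonneg _) (sq_nonneg _)
    hG1 hco huv hcross
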